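/- Symmetry of the Euclidean-type cubic system: if (b₁, b₂, b₃) with b₁ ≠ 0, b₂ ≠ 0, b₃ ≠ 0 is a solution of the system b₁(b₂² + b₃²) = j₁, b₂(b₁² + b₃²) = j₂, b₃(b₁² + b₂²) = j₃, then (K/b₁, K/b₂, K/b₃) is also a solution of the same system, where K = ((b₁ b₂ b₃)²)^{1/3} is the real cube root of (b₁ b₂ b₃)². -/
import Mathlib


/-- The real cube root. -/
noncomputable def cbrt (x : ℝ) : ℝ :=
  if 0 ≤ x then x ^ ((1 : ℝ) / 3) else -((-x) ^ ((1 : ℝ) / 3))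

lemma cbrt_cube_nonneg {x : ℝ} (hx : 0 ≤ x) : (cbrt x) ^ 3 = x := by
  rw [cbrt, if_pos hx, ← Real.rpow_natCast (x ^ ((1:ℝ)/3)) 3, ← Real.rpow_mul hx]
  norm_num

/-- Symmetry of the Euclidean-type cubic system: if `(b₁, b₂, b₃)` with all entries
nonzero solves `b₁(b₂² + b₃²) = j₁`, `b₂(b₁² + b₃²) = j₂`, `b₃(b₁² + b₂²) = j₃`, then so
does `(K/b₁, K/b₂, K/b₃)` where `K = ((b₁ b₂ b₃)²)^{1/3}`. -/
theorem euclidean_cubic_symmetry (j₁ j₂ j₃ b₁ b₂ b₃ : ℝ)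
    (hb₁ : b₁ ≠ 0) (hb₂ : b₂ ≠ 0) (hb₃ : b₃ ≠ 0)
    (h₁ : b₁ * (b₂ ^ 2 + b₃ ^ 2) = j₁)
    (h₂ : b₂ * (b₁ ^ 2 + b₃ ^ 2) = j₂)
    (h₃ : b₃ * (b₁ ^ 2 + b₂ ^ 2) = j₃)
    (K : ℝ) (hK : K = cbrt ((b₁ * b₂ * b₃) ^ 2)) :
    (K / b₁) * ((K / b₂) ^ 2 + (K / b₃) ^ 2) = j₁ ∧
    (K / b₂) * ((K / b₁) ^ 2 + (K / b₃) ^ 2) = j₂ ∧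
    (K / b₃) * ((K / b₁) ^ 2 + (K / b₂) ^ 2) = j₃ := by
  have hK3 : K ^ 3 = (b₁ * b₂ * b₃) ^ 2 := by
    rw [hK]; exact cbrt_cube_nonneg (sq_nonneg _)
  refine ⟨?_, ?_, ?_⟩
  · field_simp
    linear_combination (b₃ ^ 2 + b₂ ^ 2) * hK3 + (b₁ * b₂ ^ 2 * b₃ ^ 2) * h₁
  · field_simp
    linear_combination (b₃ ^ 2 + b₁ ^ 2) * hK3 + (b₂ * b₁ ^ 2 * b₃ ^ 2) * h₂
  · field_simp
    linear_combination (b₂ ^ 2 + b₁ ^ 2) * hK3 + (b₃ * b₁ ^ 2 * b₂ ^ 2) * h₃
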